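/- Suppose θ = 1, ρ = σ = c with c ∈ (0, 2), rs‖ℒ‖² < 1, and w* = (u₀*, p*) ∈ W is a saddle point. Let sequences (w^k) and (w̃^k) in W satisfy, for every k, the prediction variational inequality φ(u₀) − φ(ũ₀^k) + ⟨w − w̃^k, F(w̃^k) + G(w̃^k − w^k)⟩ ≥ 0 for all w = (u₀, p) ∈ W (with θ = 1 in G), and the correction step w^{k+1} = w^k − c(w^k − w̃^k). For K ∈ ℕ define w_K = (1/(K+1)) Σ_{k=0}^K w̃^k and u_{0,K} = (1/(K+1)) Σ_{k=0}^K ũ₀^k. Then φ(u_{0,K}) − φ(u₀*) + ⟨w_K − w*, F(w*)⟩ ≤ ‖w⁰ − w*‖²_G / (2(K+1)c), where ‖w‖²_G = ⟨Gw, w⟩ with θ = 1 in G. -/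

import Mathlib

open scoped InnerProductSpace RealInnerProductSpace

noncomputable section

/-- The product space `W = H × H` equipped with the Hilbert space structure
`⟨(u,p),(u',p')⟩ = ⟨u,u'⟩ + ⟨p,p'⟩`. -/
abbrev W (H : Type*) [NormedAddCommGroup H] [InnerProductSpace ℝ H] := WithLp 2 (H × H)

/-- The canonical (linear homeomorphism) identification of `W` with the plain product. -/
def eW (H : Type*) [NormedAddCommGroup H] [InnerProductSpace ℝ H] :
    W H ≃L[ℝ] H × H := WithLp.prodContinuousLinearEquiv 2 ℝ H H

variable {H : Type*} [NormedAddCommGroup H] [InnerProductSpace ℝ H] [CompleteSpace H]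

/-- The block diagonal operator `D(u,p) = (ρu, σp)` on `W`. -/
def opD (H : Type*) [NormedAddCommGroup H] [InnerProductSpace ℝ H] (ρ σ : ℝ) :
    W H →L[ℝ] W H :=
  ((eW H).symm.toContinuousLinearMap.comp
    ((ρ • ContinuousLinearMap.fst ℝ H H).prod (σ • ContinuousLinearMap.snd ℝ H H))).comp
    (eW H).toContinuousLinearMap

/-- The block operator `G(u,p) = ((1/r)u − ℒ*p, −θℒu + (1/s)p)` on `W`. -/
def opG (L : H →L[ℝ] H) (r s θ : ℝ) : W H →L[ℝ] W H :=
  ((eW H).symm.toContinuousLinearMap.comp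
    (((1 / r) • ContinuousLinearMap.fst ℝ H H
        - (ContinuousLinearMap.adjoint L).comp (ContinuousLinearMap.snd ℝ H H)).prod
      ((-θ) • (L.comp (ContinuousLinearMap.fst ℝ H H))
        + (1 / s) • ContinuousLinearMap.snd ℝ H H))).comp
    (eW H).toContinuousLinearMap

/-- The operator `K = G ∘ D⁻¹`. -/
def opK (L : H →L[ℝ] H) (r s θ ρ σ : ℝ) : W H →L[ℝ] W H :=
  (opG L r s θ).comp (opD H ρ⁻¹ σ⁻¹)

/-- The operator `N = G + G* − D* ∘ K ∘ D`. -/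
def opN (L : H →L[ℝ] H) (r s θ ρ σ : ℝ) : W H →L[ℝ] W H :=
  opG L r s θ + ContinuousLinearMap.adjoint (opG L r s θ)
    - ((ContinuousLinearMap.adjoint (opD H ρ σ)).comp
        ((opK L r s θ ρ σ).comp (opD H ρ σ)))

/-- The map `F(u₀, p) = (τu₀ + ℒ*p, p − ℒu₀ + u_T)` on `W`. -/
def Fmap (L : H →L[ℝ] H) (uT : H) (τ : ℝ) : W H → W H := fun w =>
  (eW H).symm (τ • ((eW H) w).1 + ContinuousLinearMap.adjoint L ((eW H) w).2,
               ((eW H) w).2 - L ((eW H) w).1 + uT)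

/-- `‖w‖²_A = ⟨Aw, w⟩` for an operator `A` on `W`. -/
def normSq (A : W H →L[ℝ] W H) (w : W H) : ℝ := ⟪A w, w⟫_ℝ

/-- A saddle point `w* = (u₀*, p*)`: `φ(u₀) − φ(u₀*) + ⟨w − w*, F(w*)⟩ ≥ 0` for all `w`. -/
def IsSaddle (L : H →L[ℝ] H) (uT : H) (τ : ℝ) (φ : H → ℝ) (wstar : W H) : Prop :=
  ∀ w : W H, φ ((eW H w).1) - φ ((eW H wstar).1)
      + ⟪w - wstar, Fmap L uT τ wstar⟫_ℝ ≥ 0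

/-- The prediction variational inequality satisfied by `w̃` given `wᵏ`:
`φ(u₀) − φ(ũ₀) + ⟨w − w̃, F(w̃) + G(w̃ − wᵏ)⟩ ≥ 0` for all `w`. -/
def PredVI (L : H →L[ℝ] H) (uT : H) (τ : ℝ) (φ : H → ℝ) (r s θ : ℝ)
    (wk wt : W H) : Prop :=
  ∀ w : W H, φ ((eW H w).1) - φ ((eW H wt).1)
      + ⟪w - wt, Fmap L uT τ wt + opG L r s θ (wt - wk)⟫_ℝ ≥ 0

end

section Aux
variable {H : Type*} [NormedAddCommGroup H] [InnerProductSpace ℝ H] [CompleteSpace H]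

lemma inner_opG_one (L : H →L[ℝ] H) (r s : ℝ) (a b : W H) :
    ⟪opG L r s 1 a, b⟫_ℝ = (1/r)*⟪a.fst,b.fst⟫_ℝ - ⟪a.snd, L b.fst⟫_ℝ - ⟪L a.fst, b.snd⟫_ℝ
      + (1/s)*⟪a.snd,b.snd⟫_ℝ := by
  simp [opG, eW, WithLp.prod_inner_apply, inner_sub_left, inner_add_left, inner_smul_left,
    ContinuousLinearMap.adjoint_inner_left, real_inner_comm (L a.fst) b.snd]
  ring

lemma opG_symm (L : H →L[ℝ] H) (r s : ℝ) (a b : W H) :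
    ⟪opG L r s 1 a, b⟫_ℝ = ⟪opG L r s 1 b, a⟫_ℝ := by
  rw [inner_opG_one, inner_opG_one, real_inner_comm a.fst b.fst, real_inner_comm a.snd b.snd,
    real_inner_comm a.snd (L b.fst), real_inner_comm (L a.fst) b.snd]
  ring

lemma opG_psd (L : H →L[ℝ] H) {r s : ℝ} (hr : 0 < r) (hs : 0 < s)
    (hrs : r * s * ‖L‖ ^ 2 < 1) (a : W H) : 0 ≤ ⟪opG L r s 1 a, a⟫_ℝ := by
  rw [inner_opG_one]
  have hL : ⟪L a.fst, a.snd⟫_ℝ ≤ ‖L‖ * ‖a.fst‖ * ‖a.snd‖ := by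
    calc ⟪L a.fst, a.snd⟫_ℝ ≤ ‖L a.fst‖ * ‖a.snd‖ := real_inner_le_norm _ _
      _ ≤ (‖L‖ * ‖a.fst‖) * ‖a.snd‖ :=
          mul_le_mul_of_nonneg_right (L.le_opNorm a.fst) (norm_nonneg _)
      _ = ‖L‖ * ‖a.fst‖ * ‖a.snd‖ := by ring
  have hcomm : ⟪a.snd, L a.fst⟫_ℝ = ⟪L a.fst, a.snd⟫_ℝ := real_inner_comm _ _
  have h1 : ⟪a.fst, a.fst⟫_ℝ = ‖a.fst‖^2 := real_inner_self_eq_norm_sq _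
  have h2 : ⟪a.snd, a.snd⟫_ℝ = ‖a.snd‖^2 := real_inner_self_eq_norm_sq _
  rw [hcomm, h1, h2]
  set x := ‖a.fst‖; set y := ‖a.snd‖; set t := ⟪L a.fst, a.snd⟫_ℝ
  have hx : 0 ≤ x := norm_nonneg _
  have hy : 0 ≤ y := norm_nonneg _
  have hn : 0 ≤ ‖L‖ := norm_nonneg _
  have key : 0 ≤ s*x^2 + r*y^2 - 2*(r*s)*t := by
    nlinarith [sq_nonneg (x - r*‖L‖*y), mul_pos hr hs, sq_nonneg y, sq_nonneg x,
      mul_nonneg (mul_nonneg hx hy) hn, mul_nonneg hr.le (sq_nonneg y)]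
  have heq : (1/r)*x^2 - t - t + (1/s)*y^2 = (s*x^2 + r*y^2 - 2*(r*s)*t)/(r*s) := by
    field_simp; ring
  rw [heq]
  exact div_nonneg key (mul_pos hr hs).le

lemma opG_quad (L : H →L[ℝ] H) (r s : ℝ) (x d : W H) (c : ℝ) :
    ⟪opG L r s 1 (x - c • d), x - c • d⟫_ℝ
      = ⟪opG L r s 1 x, x⟫_ℝ - 2*c*⟪opG L r s 1 d, x⟫_ℝ + c^2*⟪opG L r s 1 d, d⟫_ℝ := by
  simp only [map_sub, map_smul, inner_sub_left, inner_sub_right,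
    real_inner_smul_left, real_inner_smul_right]
  rw [opG_symm L r s x d]
  ring

lemma inner_Fmap (L : H →L[ℝ] H) (uT : H) (τ : ℝ) (v a : W H) :
    ⟪v, Fmap L uT τ a⟫_ℝ = τ*⟪v.fst,a.fst⟫_ℝ + ⟪L v.fst, a.snd⟫_ℝ + ⟪v.snd, a.snd⟫_ℝ
      - ⟪v.snd, L a.fst⟫_ℝ + ⟪v.snd, uT⟫_ℝ := by
  simp [Fmap, eW, WithLp.prod_inner_apply, inner_add_right, inner_sub_right, inner_smul_right,
    ContinuousLinearMap.adjoint_inner_right]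
  ring

lemma Fmono (L : H →L[ℝ] H) (uT : H) {τ : ℝ} (hτ : 0 < τ) (a b : W H) :
    0 ≤ ⟪a - b, Fmap L uT τ a - Fmap L uT τ b⟫_ℝ := by
  rw [inner_sub_right, inner_Fmap, inner_Fmap]
  simp only [WithLp.sub_fst, WithLp.sub_snd]
  have e1 : ⟪a.fst-b.fst, a.fst⟫_ℝ - ⟪a.fst-b.fst, b.fst⟫_ℝ = ‖a.fst-b.fst‖^2 := by
    rw [← inner_sub_right, real_inner_self_eq_norm_sq]
  have e2 : ⟪a.snd-b.snd, a.snd⟫_ℝ - ⟪a.snd-b.snd, b.snd⟫_ℝ = ‖a.snd-b.snd‖^2 := by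
    rw [← inner_sub_right, real_inner_self_eq_norm_sq]
  have e3 : ⟪L (a.fst-b.fst), a.snd⟫_ℝ - ⟪L (a.fst-b.fst), b.snd⟫_ℝ = ⟪L (a.fst-b.fst), a.snd-b.snd⟫_ℝ :=
    (inner_sub_right _ _ _).symm
  have e4 : ⟪a.snd-b.snd, L a.fst⟫_ℝ - ⟪a.snd-b.snd, L b.fst⟫_ℝ = ⟪L (a.fst-b.fst), a.snd-b.snd⟫_ℝ := by
    rw [← inner_sub_right, ← map_sub, real_inner_comm]
  have e1' : τ*⟪a.fst-b.fst, a.fst⟫_ℝ - τ*⟪a.fst-b.fst, b.fst⟫_ℝ = τ*‖a.fst-b.fst‖^2 := by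
    rw [← mul_sub, e1]
  have h1 : 0 ≤ τ * ‖a.fst-b.fst‖^2 := mul_nonneg hτ.le (sq_nonneg _)
  have h2 : 0 ≤ ‖a.snd-b.snd‖^2 := sq_nonneg _
  linarith
end Aux

/-- Ergodic rate for `θ = 1`, `ρ = σ = c ∈ (0,2)` and `rs‖ℒ‖² < 1`:
`φ(u_{0,M}) − φ(u₀*) + ⟨w_M − w*, F(w*)⟩ ≤ ‖w⁰ − w*‖²_G / (2(M+1)c)`. -/
theorem ergodic_rate_theta_one
    {H : Type*} [NormedAddCommGroup H] [InnerProductSpace ℝ H] [CompleteSpace H]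
    (L : H →L[ℝ] H) (uT : H) (τ β : ℝ) (hτ : 0 < τ) (hβ : 0 ≤ β)
    (φ : H → ℝ) (hφ : ConvexOn ℝ Set.univ φ)
    (r s c : ℝ) (hr : 0 < r) (hs : 0 < s)
    (hc : c ∈ Set.Ioo (0 : ℝ) 2) (hrs : r * s * ‖L‖ ^ 2 < 1)
    (wstar : W H) (hstar : IsSaddle L uT τ φ wstar)
    (w wt : ℕ → W H)
    (hVI : ∀ k : ℕ, PredVI L uT τ φ r s 1 (w k) (wt k))
    (hcorr : ∀ k : ℕ, w (k + 1) = w k - c • (w k - wt k)) :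
    ∀ M : ℕ,
      φ (((M : ℝ) + 1)⁻¹ • ∑ k ∈ Finset.range (M + 1), (eW H (wt k)).1)
          - φ ((eW H wstar).1)
          + ⟪(((M : ℝ) + 1)⁻¹ • ∑ k ∈ Finset.range (M + 1), wt k) - wstar,
              Fmap L uT τ wstar⟫_ℝ
        ≤ normSq (opG L r s 1) (w 0 - wstar) / (2 * ((M : ℝ) + 1) * c) := by
  intro M
  obtain ⟨hc0, hc2⟩ := hc
  have h2c : (0:ℝ) < 2*c := by linarith
  have hM1 : (0:ℝ) < (M:ℝ)+1 := by positivity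
  have hcne : c ≠ 0 := hc0.ne'
  have hMne : ((M:ℝ)+1) ≠ 0 := hM1.ne'
  set Q : ℕ → ℝ := fun k => ⟪opG L r s 1 (w k - wstar), w k - wstar⟫_ℝ with hQ
  have hQ0 : ∀ k, 0 ≤ Q k := fun k => opG_psd L hr hs hrs _
  have step : ∀ k : ℕ, φ ((eW H (wt k)).1) - φ ((eW H wstar).1)
      + ⟪wt k - wstar, Fmap L uT τ wstar⟫_ℝ ≤ (Q k - Q (k+1)) / (2*c) := by
    intro k
    have h1 := hVI k wstar
    have hx : w (k+1) - wstar = (w k - wstar) - c • (w k - wt k) := by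
      rw [hcorr k]; abel
    have hQ1 : Q (k+1) = Q k - 2*c*⟪opG L r s 1 (w k - wt k), w k - wstar⟫_ℝ
        + c^2 * ⟪opG L r s 1 (w k - wt k), w k - wt k⟫_ℝ := by
      simp only [hQ]
      rw [hx, opG_quad]
    have hvd : ⟪wstar - wt k, opG L r s 1 (wt k - w k)⟫_ℝ
        = ⟪opG L r s 1 (w k - wt k), w k - wstar⟫_ℝ
          - ⟪opG L r s 1 (w k - wt k), w k - wt k⟫_ℝ := by
      have h' : wstar - wt k = (w k - wt k) - (w k - wstar) := by abel
      have h'' : wt k - w k = -(w k - wt k) := by abel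
      rw [h', h'', map_neg, inner_neg_right, inner_sub_left,
        real_inner_comm (w k - wt k) (opG L r s 1 (w k - wt k)),
        real_inner_comm (w k - wstar) (opG L r s 1 (w k - wt k))]
      ring
    have hFsplit : ⟪wstar - wt k, Fmap L uT τ (wt k)⟫_ℝ
        = ⟪wstar - wt k, Fmap L uT τ wstar⟫_ℝ
          - ⟪wstar - wt k, Fmap L uT τ wstar - Fmap L uT τ (wt k)⟫_ℝ := by
      rw [inner_sub_right]; ring
    have hmono := Fmono L uT hτ wstar (wt k)
    rw [inner_add_right, hFsplit, hvd] at h1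
    have hneg : ⟪wt k - wstar, Fmap L uT τ wstar⟫_ℝ
        = -⟪wstar - wt k, Fmap L uT τ wstar⟫_ℝ := by
      have h3 : wt k - wstar = -(wstar - wt k) := by abel
      rw [h3, inner_neg_left]
    have hdiv : (Q k - Q (k+1)) / (2*c)
        = ⟪opG L r s 1 (w k - wt k), w k - wstar⟫_ℝ
          - (c/2) * ⟪opG L r s 1 (w k - wt k), w k - wt k⟫_ℝ := by
      rw [hQ1]; field_simp; ring
    have hCpos : 0 ≤ ⟪opG L r s 1 (w k - wt k), w k - wt k⟫_ℝ := opG_psd L hr hs hrs _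
    have hc' : 0 ≤ (1 - c/2) * ⟪opG L r s 1 (w k - wt k), w k - wt k⟫_ℝ :=
      mul_nonneg (by linarith) hCpos
    rw [hneg, hdiv]
    nlinarith [h1, hmono, hc']
  have hsum : ∑ k ∈ Finset.range (M+1),
      (φ ((eW H (wt k)).1) - φ ((eW H wstar).1)
        + ⟪wt k - wstar, Fmap L uT τ wstar⟫_ℝ)
      ≤ Q 0 / (2*c) := by
    calc ∑ k ∈ Finset.range (M+1),
        (φ ((eW H (wt k)).1) - φ ((eW H wstar).1)
          + ⟪wt k - wstar, Fmap L uT τ wstar⟫_ℝ)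
        ≤ ∑ k ∈ Finset.range (M+1), (Q k - Q (k+1))/(2*c) :=
          Finset.sum_le_sum (fun k _ => step k)
      _ = (Q 0 - Q (M+1))/(2*c) := by
          rw [← Finset.sum_div, Finset.sum_range_sub' Q (M+1)]
      _ ≤ Q 0 / (2*c) := (div_le_div_iff_of_pos_right h2c).mpr (by linarith [hQ0 (M+1)])
  have hjen : φ (((M:ℝ)+1)⁻¹ • ∑ k ∈ Finset.range (M+1), (eW H (wt k)).1)
      ≤ ((M:ℝ)+1)⁻¹ * ∑ k ∈ Finset.range (M+1), φ ((eW H (wt k)).1) := by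
    have h := hφ.map_sum_le (t := Finset.range (M+1)) (w := fun _ => ((M:ℝ)+1)⁻¹)
      (p := fun k => (eW H (wt k)).1) (fun _ _ => by positivity)
      (by rw [Finset.sum_const, Finset.card_range, nsmul_eq_mul]; push_cast; field_simp)
      (fun _ _ => Set.mem_univ _)
    simpa [Finset.smul_sum, Finset.mul_sum, smul_eq_mul] using h
  have havg : ⟪(((M:ℝ)+1)⁻¹ • ∑ k ∈ Finset.range (M+1), wt k) - wstar,
      Fmap L uT τ wstar⟫_ℝ
      = ((M:ℝ)+1)⁻¹ * ∑ k ∈ Finset.range (M+1),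
          ⟪wt k - wstar, Fmap L uT τ wstar⟫_ℝ := by
    rw [inner_sub_left, real_inner_smul_left, sum_inner]
    simp only [inner_sub_left]
    rw [Finset.sum_sub_distrib, Finset.sum_const, Finset.card_range, nsmul_eq_mul]
    push_cast
    field_simp
    all_goals ring
  have hns : normSq (opG L r s 1) (w 0 - wstar) = Q 0 := rfl
  rw [havg, hns]
  have key2 : ((M:ℝ)+1)⁻¹ * (∑ k ∈ Finset.range (M+1),
      (φ ((eW H (wt k)).1) - φ ((eW H wstar).1)
        + ⟪wt k - wstar, Fmap L uT τ wstar⟫_ℝ))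
      ≤ ((M:ℝ)+1)⁻¹ * (Q 0 / (2*c)) :=
    mul_le_mul_of_nonneg_left hsum (by positivity)
  have expand : ((M:ℝ)+1)⁻¹ * (∑ k ∈ Finset.range (M+1),
      (φ ((eW H (wt k)).1) - φ ((eW H wstar).1)
        + ⟪wt k - wstar, Fmap L uT τ wstar⟫_ℝ))
      = ((M:ℝ)+1)⁻¹ * (∑ k ∈ Finset.range (M+1), φ ((eW H (wt k)).1))
        - φ ((eW H wstar).1)
        + ((M:ℝ)+1)⁻¹ * ∑ k ∈ Finset.range (M+1),
            ⟪wt k - wstar, Fmap L uT τ wstar⟫_ℝ := by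
    rw [Finset.sum_add_distrib, Finset.sum_sub_distrib, Finset.sum_const,
      Finset.card_range, nsmul_eq_mul]
    push_cast
    field_simp
    all_goals ring
  have hrhs : ((M:ℝ)+1)⁻¹ * (Q 0 / (2*c)) = Q 0 / (2*((M:ℝ)+1)*c) := by
    rw [inv_mul_eq_div, div_div, show (2*c)*((M:ℝ)+1) = 2*((M:ℝ)+1)*c from by ring]
  linarith [hjen, key2, expand.le, expand.ge, hrhs.le, hrhs.ge]
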